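/- Let $X$ be a random variable with gamma distribution with shape parameter $\sigma/2 > 0$ and rate $1$, i.e., with probability density $f(x) = x^{\sigma/2 - 1} e^{-x} / \Gamma(\sigma/2)$ for $x > 0$. Then for every real $\xi$, $\mathbb{E}\left[e^{\xi \sqrt{X}}\right] = \frac{1}{\Gamma(\sigma/2)} \sum_{n=0}^\infty \Gamma\!\left(\frac{\sigma+n}{2}\right) \frac{\xi^n}{n!}$. -/

import Mathlib

open MeasureTheory ProbabilityTheory
open MeasureTheory ProbabilityTheory Real Set
open scoped ENNReal NNReal

lemma integral_gammaMeasure_aux {a r : ℝ} (ha : 0 < a) (hr : 0 < r) (g : ℝ → ℝ) :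
    ∫ x, g x ∂(gammaMeasure a r)
      = ∫ x, gammaPDFReal a r x * g x := by
  have hm : Measurable fun x => (gammaPDFReal a r x).toNNReal :=
    (measurable_gammaPDFReal a r).real_toNNReal
  rw [gammaMeasure]
  have h : gammaPDF a r = fun x => (((gammaPDFReal a r x).toNNReal : ℝ≥0) : ℝ≥0∞) := rfl
  rw [h, integral_withDensity_eq_integral_smul hm]
  congr 1
  ext x
  simp [NNReal.smul_def, Real.coe_toNNReal _ (gammaPDFReal_nonneg ha hr x)]

lemma moment_sqrt {a : ℝ} (ha : 0 < a) (n : ℕ) :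
    ∫ x, (Real.sqrt x) ^ n ∂(gammaMeasure a 1)
      = Gamma (a + n / 2) / Gamma a := by
  rw [integral_gammaMeasure_aux ha one_pos]
  rw [← setIntegral_eq_integral_of_forall_compl_eq_zero
      (s := Ici (0:ℝ)) (fun x hx => by
        simp only [mem_Ici, not_le] at hx
        simp [gammaPDFReal, if_neg (not_le.mpr hx)])]
  rw [integral_Ici_eq_integral_Ioi]
  have hcong : ∀ x ∈ Ioi (0:ℝ), gammaPDFReal a 1 x * (Real.sqrt x) ^ n
      = (Gamma a)⁻¹ * (Real.exp (-x) * x ^ (a + n / 2 - 1)) := by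
    intro x hx
    have hx' : (0:ℝ) < x := hx
    have hs : (Real.sqrt x) ^ n = x ^ ((n : ℝ) / 2) := by
      rw [Real.sqrt_eq_rpow, ← Real.rpow_natCast (x ^ ((1:ℝ)/2)) n,
        ← Real.rpow_mul hx'.le]
      ring_nf
    rw [gammaPDFReal, if_pos hx'.le, hs, Real.one_rpow]
    rw [show a + (n:ℝ)/2 - 1 = (a - 1) + (n:ℝ)/2 by ring,
      Real.rpow_add hx']
    ring_nf
  rw [setIntegral_congr_fun measurableSet_Ioi hcong, integral_const_mul,
    ← Real.Gamma_eq_integral (by positivity : (0:ℝ) < a + n / 2)]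
  exact (div_eq_inv_mul _ _).symm

/-- Moment generating function of `√X` for `X ~ Gamma(σ/2, 1)`:
`E[exp(ξ √X)] = Γ(σ/2)⁻¹ ∑_{n≥0} Γ((σ+n)/2) ξ^n / n!`. -/
theorem mgf_sqrt_gamma (σ : ℝ) (hσ : 0 < σ) (ξ : ℝ) :
    ∫ x, Real.exp (ξ * Real.sqrt x) ∂(gammaMeasure (σ / 2) 1)
      = (Real.Gamma (σ / 2))⁻¹ *
          ∑' n : ℕ, Real.Gamma ((σ + n) / 2) * ξ ^ n / n.factorial := by
  have ha : (0:ℝ) < σ / 2 := by positivity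
  set a := σ / 2 with ha_def
  set μ := gammaMeasure a 1 with hμ
  set F : ℕ → ℝ → ℝ := fun n x => (ξ * Real.sqrt x) ^ n / n.factorial with hF
  have hFcont : ∀ n, Continuous (F n) := fun n =>
    ((continuous_const.mul Real.continuous_sqrt).pow n).div_const _
  have hFmeas : ∀ n, AEStronglyMeasurable (F n) μ := fun n =>
    (hFcont n).aestronglyMeasurable
  -- pointwise series for exp
  have hexp : ∀ x : ℝ, Real.exp (ξ * Real.sqrt x) = ∑' n : ℕ, F n x := by
    intro x
    rw [Real.exp_eq_exp_ℝ, NormedSpace.exp_eq_tsum_div]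
  -- a.e. nonnegativity
  have hae : ∀ᵐ x ∂μ, (0:ℝ) ≤ x := by
    rw [ae_iff]
    have hset : {x : ℝ | ¬ (0:ℝ) ≤ x} = Iio 0 := by ext x; simp [mem_Iio, not_le]
    rw [hset, hμ, gammaMeasure, withDensity_apply _ measurableSet_Iio,
      lintegral_gammaPDF_of_nonpos le_rfl]
  -- finiteness of sum of lintegrals of norms
  have hfin : ∑' n : ℕ, ∫⁻ x, ‖F n x‖₊ ∂μ ≠ ∞ := by
    rw [← lintegral_tsum (fun n => ((hFcont n).measurable).nnnorm.coe_nnreal_ennreal.aemeasurable)]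
    have hpt : ∀ x : ℝ, ∑' n : ℕ, (‖F n x‖₊ : ℝ≥0∞)
        = ENNReal.ofReal (Real.exp (|ξ| * Real.sqrt x)) := by
      intro x
      have h1 : ∀ n : ℕ, (‖F n x‖₊ : ℝ≥0∞)
          = ENNReal.ofReal ((|ξ| * Real.sqrt x) ^ n / n.factorial) := by
        intro n
        rw [← enorm_eq_nnnorm, ← ofReal_norm]
        congr 1
        rw [hF]
        simp [norm_div, norm_pow, norm_mul, Real.norm_eq_abs,
          abs_of_nonneg (Real.sqrt_nonneg x), abs_mul]
      simp_rw [h1]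
      rw [← ENNReal.ofReal_tsum_of_nonneg (fun n => by positivity)
        (Real.summable_pow_div_factorial _)]
      congr 1
      rw [Real.exp_eq_exp_ℝ, NormedSpace.exp_eq_tsum_div]
    rw [lintegral_congr hpt]
    have hbound : ∀ᵐ x ∂μ, ENNReal.ofReal (Real.exp (|ξ| * Real.sqrt x))
        ≤ ENNReal.ofReal (Real.exp (ξ^2/2) * Real.exp (x/2)) := by
      filter_upwards [hae] with x hx
      apply ENNReal.ofReal_le_ofReal
      rw [← Real.exp_add]
      apply Real.exp_le_exp.mpr
      nlinarith [sq_nonneg (|ξ| - Real.sqrt x), Real.sq_sqrt hx,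
        Real.sqrt_nonneg x, abs_nonneg ξ, sq_abs ξ]
    refine ne_top_of_le_ne_top ?_ (lintegral_mono_ae hbound)
    have hg2 : Measurable fun x : ℝ => ENNReal.ofReal (Real.exp (ξ^2/2) * Real.exp (x/2)) := by
      fun_prop
    have hg1 : Measurable (gammaPDF a 1) := (measurable_gammaPDFReal a 1).ennreal_ofReal
    rw [hμ, gammaMeasure, lintegral_withDensity_eq_lintegral_mul _ hg1 hg2]
    have heq : ∀ x : ℝ, gammaPDF a 1 x * ENNReal.ofReal (Real.exp (ξ^2/2) * Real.exp (x/2))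
        = ENNReal.ofReal (Real.exp (ξ^2/2) * (2:ℝ)^a) * gammaPDF a (1/2) x := by
      intro x
      rcases lt_or_ge x 0 with hx | hx
      · rw [gammaPDF_of_neg hx, gammaPDF_of_neg hx, zero_mul, mul_zero]
      · rw [gammaPDF_of_nonneg hx, gammaPDF_of_nonneg hx,
          ← ENNReal.ofReal_mul (by positivity), ← ENNReal.ofReal_mul (by positivity)]
        congr 1
        have h2 : (0:ℝ) < (2:ℝ)^(a:ℝ) := Real.rpow_pos_of_pos two_pos a
        rw [Real.one_rpow, show ((1:ℝ)/2) = (2:ℝ)⁻¹ by norm_num,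
          Real.inv_rpow (by norm_num : (0:ℝ) ≤ 2)]
        have hE : Real.exp (-(1*x)) * Real.exp (x/2) = Real.exp (-(2⁻¹*x)) := by
          rw [← Real.exp_add]; congr 1; ring
        rw [← hE]
        field_simp
    have hg3 : Measurable (gammaPDF a (1/2)) := (measurable_gammaPDFReal a (1/2)).ennreal_ofReal
    simp only [Pi.mul_apply]
    rw [lintegral_congr heq, lintegral_const_mul _ hg3,
      lintegral_gammaPDF_eq_one ha (by norm_num)]
    simp [ENNReal.mul_eq_top]
  calc ∫ x, Real.exp (ξ * Real.sqrt x) ∂μ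
      = ∫ x, ∑' n : ℕ, F n x ∂μ := by simp_rw [hexp]
    _ = ∑' n : ℕ, ∫ x, F n x ∂μ := integral_tsum hFmeas hfin
    _ = ∑' n : ℕ, (Real.Gamma a)⁻¹ * (Real.Gamma ((σ + n) / 2) * ξ ^ n / n.factorial) := by
        refine tsum_congr fun n => ?_
        have h1 : ∀ x : ℝ, F n x = (ξ ^ n / n.factorial) * (Real.sqrt x) ^ n := by
          intro x; rw [hF]; simp [mul_pow]; ring
        simp_rw [h1]
        rw [integral_const_mul, moment_sqrt ha n,
          show a + (n:ℝ)/2 = (σ + n)/2 by rw [ha_def]; ring]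
        ring
    _ = (Real.Gamma a)⁻¹ * ∑' n : ℕ, Real.Gamma ((σ + n) / 2) * ξ ^ n / n.factorial :=
        tsum_mul_left
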